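/- Let a_{i,j} be nonnegative real numbers indexed by pairs of natural numbers i, j, and suppose there is a real number α < 2 such that for every i one has a_{i,i} = 1 and ∑_j a_{i,j} = α. Let x_j, y_j be nonnegative reals indexed by natural numbers j. If for every i one has ∑_j a_{i,j} x_j = ∑_j a_{i,j} y_j = 1, then x_j = y_j for all j. -/

import Mathlib

open scoped ENNReal

private lemma la_split_tsum (a : ℕ → ℝ≥0∞) (i : ℕ) :
    ∑' j, a j = a i + ∑' j, if j = i then 0 else a j := by
  rw [ENNReal.tsum_eq_add_tsum_ite i]
  congr 1
  apply tsum_congr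
  intro j
  split_ifs <;> rfl

/-- Infinite-dimensional linear algebra lemma (Ellenberg–Venkatesh–Westerland):
if `a_{i,j}` are nonnegative reals (in `[0,∞]`) with `a_{i,i} = 1` and `∑_j a_{i,j} = α` for
some `α < 2`, and `x_j, y_j` are nonnegative reals with `∑_j a_{i,j} x_j = ∑_j a_{i,j} y_j = 1`
for all `i`, then `x_j = y_j` for all `j`. -/
theorem la_lemma (a : ℕ → ℕ → ℝ≥0∞) (α : ℝ≥0∞) (hα : α < 2)
    (hdiag : ∀ i, a i i = 1) (hrow : ∀ i, ∑' j, a i j = α)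
    (x y : ℕ → ℝ≥0∞)
    (hx : ∀ i, ∑' j, a i j * x j = 1) (hy : ∀ i, ∑' j, a i j * y j = 1) :
    ∀ j, x j = y j := by
  set M : ℝ≥0∞ := ⨆ j, (x j - y j) ⊔ (y j - x j) with hMdef
  have hMge : ∀ j, (x j - y j) ⊔ (y j - x j) ≤ M :=
    fun j => le_iSup (fun j => (x j - y j) ⊔ (y j - x j)) j
  have hxb : ∀ j, x j ≤ 1 := by
    intro j
    calc x j = a j j * x j := by rw [hdiag j, one_mul]
    _ ≤ ∑' k, a j k * x k := ENNReal.le_tsum j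
    _ = 1 := hx j
  have hyb : ∀ j, y j ≤ 1 := by
    intro j
    calc y j = a j j * y j := by rw [hdiag j, one_mul]
    _ ≤ ∑' k, a j k * y k := ENNReal.le_tsum j
    _ = 1 := hy j
  have hMb : M ≤ 1 :=
    iSup_le fun j => sup_le (tsub_le_self.trans (hxb j)) (tsub_le_self.trans (hyb j))
  -- row tail sum equals α - 1
  have htail : ∀ i, (∑' j, if j = i then 0 else a i j) = α - 1 := by
    intro i
    have h := hrow i
    rw [la_split_tsum (a i) i, hdiag i] at h
    have h' : (∑' j, if j = i then 0 else a i j) + 1 = α := by rw [add_comm]; exact h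
    exact ENNReal.eq_sub_of_add_eq ENNReal.one_ne_top h'
  -- key estimate
  have key : ∀ f g : ℕ → ℝ≥0∞, (∀ i, ∑' j, a i j * f j = 1) →
      (∀ i, ∑' j, a i j * g j = 1) → (∀ j, g j - f j ≤ M) →
      ∀ i, f i - g i ≤ (α - 1) * M := by
    intro f g hf hg hgf i
    set Sf : ℝ≥0∞ := ∑' j, if j = i then 0 else a i j * f j with hSf
    set Sg : ℝ≥0∞ := ∑' j, if j = i then 0 else a i j * g j with hSg
    have hfi : f i + Sf = 1 := by
      have h := hf i
      rwa [la_split_tsum (fun j => a i j * f j) i, hdiag i, one_mul] at h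
    have hgi : g i + Sg = 1 := by
      have h := hg i
      rwa [la_split_tsum (fun j => a i j * g j) i, hdiag i, one_mul] at h
    have hSf1 : Sf ≤ 1 := by rw [← hfi]; exact le_add_self
    have hSfne : Sf ≠ ∞ := (hSf1.trans_lt (by norm_num)).ne
    have hSgSf : Sg ≤ Sf + (α - 1) * M := by
      have hpt : ∀ j, (if j = i then 0 else a i j * g j) ≤
          (if j = i then 0 else a i j * f j) + (if j = i then 0 else a i j) * M := by
        intro j
        by_cases hj : j = i
        · simp [hj]
        · simp only [hj, if_neg, if_false]
          calc a i j * g j ≤ a i j * (f j + M) := by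
                gcongr
                calc g j ≤ f j + (g j - f j) := le_add_tsub
                _ ≤ f j + M := by gcongr; exact hgf j
          _ = a i j * f j + a i j * M := by ring
      calc Sg ≤ ∑' j, ((if j = i then 0 else a i j * f j) + (if j = i then 0 else a i j) * M) :=
            ENNReal.tsum_le_tsum hpt
      _ = Sf + (∑' j, (if j = i then 0 else a i j)) * M := by
            rw [ENNReal.tsum_add, ENNReal.tsum_mul_right]
      _ = Sf + (α - 1) * M := by rw [htail i]
    have hfg : f i + Sf ≤ (g i + (α - 1) * M) + Sf := by
      calc f i + Sf = 1 := hfi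
      _ = g i + Sg := hgi.symm
      _ ≤ g i + (Sf + (α - 1) * M) := by gcongr
      _ = (g i + (α - 1) * M) + Sf := by ring
    have h := (ENNReal.add_le_add_iff_right hSfne).mp hfg
    exact tsub_le_iff_left.mpr h
  have hMle : M ≤ (α - 1) * M := by
    apply iSup_le
    intro j
    exact sup_le
      (key x y hx hy (fun j => le_trans le_sup_right (hMge j)) j)
      (key y x hy hx (fun j => le_trans le_sup_left (hMge j)) j)
  have hM0 : M = 0 := by
    by_contra hM0
    have hMne : M ≠ ∞ := (hMb.trans_lt (by norm_num)).ne
    have h1α : (1 : ℝ≥0∞) ≤ α := by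
      rw [← hrow 0, ← hdiag 0]; exact ENNReal.le_tsum 0
    have hαlt : α - 1 < 1 :=
      ENNReal.sub_lt_of_lt_add h1α (by rw [one_add_one_eq_two]; exact hα)
    have hlt : (α - 1) * M < 1 * M :=
      by rw [mul_comm _ M, mul_comm 1 M]; exact ENNReal.mul_lt_mul_right hM0 hMne hαlt
    rw [one_mul] at hlt
    exact absurd hMle (not_le.mpr hlt)
  intro j
  have h1 : x j - y j = 0 :=
    le_antisymm ((le_trans le_sup_left (hMge j)).trans hM0.le) zero_le
  have h2 : y j - x j = 0 :=
    le_antisymm ((le_trans le_sup_right (hMge j)).trans hM0.le) zero_le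
  exact le_antisymm (tsub_eq_zero_iff_le.mp h1) (tsub_eq_zero_iff_le.mp h2)
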